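/- arXiv:math/0512500 — 4 statements merged into one kernel-verified Lean document; each statement's English description precedes it below -/
import Mathlib

section
/- Let q be an invertible scalar and x, α nonzero scalars. The assignment E(a) = 0, E(d) = q^{-1}(x + x^{-1}), E(b) = q^{-1}α, E(c) = -q^{-1}α^{-1} extends to an algebra homomorphism (one-dimensional representation) of the reflection algebra L_q(sl(2)), i.e., these values satisfy all defining relations: ac = q^2 ca, ba = q^2 ab, bc - cb = (1-q^{-2})a(d-a), cd - dc = (1-q^{-2})ca, db - bd = (1-q^{-2})ab, ad = da, ad - q^2 cb = 1. -/
/-- The primitive one-dimensional representation `E_{x,α}` of the reflection algebra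
`L_q(sl(2))`: the scalars `a = 0`, `d = q⁻¹(x + x⁻¹)`, `b = q⁻¹ α`, `c = -q⁻¹ α⁻¹`
satisfy all seven defining relations. -/
theorem primitive_representation_relations (q x α a b c d : ℂ)
    (hq : q ≠ 0) (hx : x ≠ 0) (hα : α ≠ 0)
    (ha : a = 0) (hd : d = q⁻¹ * (x + x⁻¹)) (hb : b = q⁻¹ * α) (hc : c = -q⁻¹ * α⁻¹) :
    (a * c = q ^ 2 * (c * a)) ∧
    (b * a = q ^ 2 * (a * b)) ∧
    (b * c - c * b = (1 - q ^ (-2 : ℤ)) * (a * (d - a))) ∧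
    (c * d - d * c = (1 - q ^ (-2 : ℤ)) * (c * a)) ∧
    (d * b - b * d = (1 - q ^ (-2 : ℤ)) * (a * b)) ∧
    (a * d = d * a) ∧
    (a * d - q ^ 2 * (c * b) = 1) := by
  subst ha hd hb hc
  refine ⟨by ring, by ring, by ring, by ring, by ring, by ring, ?_⟩
  field_simp
  ring
end

section
/- Every finite-dimensional irreducible representation Π of the reflection algebra L_q(sl(2)) on which the generator a acts non-invertibly (i.e., ker Π(a) ≠ 0) is one-dimensional, with Π(a) = 0, Π(b)Π(c) = Π(c)Π(b), -q^2 Π(b)Π(c) = 1, and Π(d) scalar. -/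
/-- Every finite-dimensional irreducible representation of the reflection algebra
`L_q(sl(2))` on which the generator `a` acts non-invertibly (its kernel is nonzero)
is one-dimensional, with `Π(a) = 0`, `Π(b)Π(c) = Π(c)Π(b)`, `-q² Π(b)Π(c) = 1` and
`Π(d)` a scalar. -/
theorem primitive_irreducible_one_dimensional (q : ℂ) (hq : q ≠ 0)
    (hroot : ∀ k : ℕ, k ≠ 0 → q ^ k ≠ 1)
    (V : Type*) [AddCommGroup V] [Module ℂ V] [FiniteDimensional ℂ V] [Nontrivial V]
    (A B C D : Module.End ℂ V)
    (h1 : A * C = q ^ 2 • (C * A))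
    (h2 : B * A = q ^ 2 • (A * B))
    (h3 : B * C - C * B = (1 - q ^ (-2 : ℤ)) • (A * (D - A)))
    (h4 : C * D - D * C = (1 - q ^ (-2 : ℤ)) • (C * A))
    (h5 : D * B - B * D = (1 - q ^ (-2 : ℤ)) • (A * B))
    (h6 : A * D = D * A)
    (h7 : A * D - q ^ 2 • (C * B) = 1)
    (hirr : ∀ W : Submodule ℂ V,
        (∀ v ∈ W, A v ∈ W) → (∀ v ∈ W, B v ∈ W) →
        (∀ v ∈ W, C v ∈ W) → (∀ v ∈ W, D v ∈ W) → W = ⊥ ∨ W = ⊤)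
    (hker : LinearMap.ker A ≠ ⊥) :
    Module.finrank ℂ V = 1 ∧ A = 0 ∧ B * C = C * B ∧
      (-(q ^ 2)) • (B * C) = 1 ∧ ∃ μ : ℂ, D = μ • (1 : Module.End ℂ V) := by
  have hq2 : (q : ℂ) ^ 2 ≠ 0 := pow_ne_zero 2 hq
  -- Step 1 : A = 0
  have hA : A = 0 := by
    have hkerTop : LinearMap.ker A = ⊤ := by
      rcases hirr (LinearMap.ker A)
        (fun v hv => by
          simp only [LinearMap.mem_ker] at hv ⊢
          simp [hv])
        (fun v hv => by
          simp only [LinearMap.mem_ker] at hv ⊢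
          have := congrArg (fun f : Module.End ℂ V => f v) h2
          simp only [Module.End.mul_apply, LinearMap.smul_apply, hv, map_zero] at this
          exact (smul_eq_zero.mp this.symm).resolve_left hq2
          )
        (fun v hv => by
          simp only [LinearMap.mem_ker] at hv ⊢
          have := congrArg (fun f : Module.End ℂ V => f v) h1
          simp only [Module.End.mul_apply, LinearMap.smul_apply, hv, map_zero,
            smul_zero] at this
          exact this)
        (fun v hv => by
          simp only [LinearMap.mem_ker] at hv ⊢
          have := congrArg (fun f : Module.End ℂ V => f v) h6
          simp only [Module.End.mul_apply, hv, map_zero] at this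
          exact this) with h | h
      · exact absurd h hker
      · exact h
    exact LinearMap.ker_eq_top.mp hkerTop
  subst hA
  -- Step 2 : commutation relations
  have hBC : B * C = C * B := by
    have := h3; simp only [zero_mul, smul_zero, sub_eq_zero] at this; exact this
  have hCD : C * D = D * C := by
    have := h4; simp only [mul_zero, smul_zero, sub_eq_zero] at this; exact this
  have hDB : D * B = B * D := by
    have := h5; simp only [zero_mul, smul_zero, sub_eq_zero] at this; exact this
  have hCB1 : (-(q ^ 2)) • (C * B) = 1 := by
    have := h7; simp only [zero_mul, zero_sub] at this
    rw [neg_smul]; exact this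
  have hBC1 : (-(q ^ 2)) • (B * C) = 1 := by rw [hBC]; exact hCB1
  -- scalar lemma
  have scalar : ∀ X : Module.End ℂ V, X * B = B * X → X * C = C * X → X * D = D * X →
      ∃ μ : ℂ, X = μ • (1 : Module.End ℂ V) := by
    intro X hB hC hD
    obtain ⟨μ, hμ⟩ := Module.End.exists_eigenvalue X
    refine ⟨μ, ?_⟩
    have comm : ∀ Y : Module.End ℂ V, X * Y = Y * X →
        ∀ v ∈ X.eigenspace μ, Y v ∈ X.eigenspace μ := by
      intro Y hY v hv
      rw [Module.End.mem_eigenspace_iff] at hv ⊢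
      have := congrArg (fun f : Module.End ℂ V => f v) hY
      simp only [Module.End.mul_apply, hv, map_smul] at this
      exact this
    have htop : X.eigenspace μ = ⊤ := by
      rcases hirr (X.eigenspace μ)
        (fun v hv => by simp)
        (comm B hB) (comm C hC) (comm D hD) with h | h
      · exact absurd h hμ
      · exact h
    ext v
    have hv : v ∈ X.eigenspace μ := htop ▸ Submodule.mem_top
    rw [Module.End.mem_eigenspace_iff] at hv
    simpa using hv
  obtain ⟨β, hB⟩ := scalar B rfl hBC hDB.symm
  obtain ⟨γ, hC⟩ := scalar C hBC.symm rfl hCD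
  obtain ⟨δ, hD⟩ := scalar D hDB hCD.symm rfl
  refine ⟨?_, rfl, hBC, hBC1, δ, hD⟩
  -- Step 3 : one-dimensional
  obtain ⟨v, hv⟩ := exists_ne (0 : V)
  have hspan : (ℂ ∙ v) = ⊤ := by
    rcases hirr (ℂ ∙ v)
      (fun w hw => by simp)
      (fun w hw => by rw [hB]; simpa using Submodule.smul_mem _ β hw)
      (fun w hw => by rw [hC]; simpa using Submodule.smul_mem _ γ hw)
      (fun w hw => by rw [hD]; simpa using Submodule.smul_mem _ δ hw) with h | h
    · exact absurd (h ▸ Submodule.mem_span_singleton_self v) (by simpa using hv)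
    · exact h
  rw [← finrank_top ℂ V, ← hspan, finrank_span_singleton hv]
end

section
/- Let R^J be an invertible solution of the quantum Yang-Baxter equation R^J_{12} R^J_{13} R^J_{23} = R^J_{23} R^J_{13} R^J_{12} in A⊗A⊗A for an algebra A, and suppose P_1, P_2 (acting in tensor factors) satisfy Δ^J(P) = (R^J_{12})^{-1} P_1 R^J_{12} P_2 where Δ^J is an algebra map intertwined by R^J (i.e., R^J Δ^J(a) = (Δ^J)'(a) R^J for all a). Then P satisfies the reflection equation R^J_{21} P_1 R^J_{12} P_2 = P_2 R^J_{21} P_1 R^J_{12}. -/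
open TensorProduct

/-- The embedding `A ⊗ A → A ⊗ A ⊗ A` in the factors 1,2: `a ⊗ b ↦ a ⊗ b ⊗ 1`. -/
noncomputable def iota12 (A : Type*) [Ring A] [Algebra ℂ A] :
    (A ⊗[ℂ] A) →ₐ[ℂ] A ⊗[ℂ] (A ⊗[ℂ] A) :=
  Algebra.TensorProduct.map (AlgHom.id ℂ A) Algebra.TensorProduct.includeLeft

/-- The embedding `A ⊗ A → A ⊗ A ⊗ A` in the factors 1,3: `a ⊗ b ↦ a ⊗ 1 ⊗ b`. -/
noncomputable def iota13 (A : Type*) [Ring A] [Algebra ℂ A] :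
    (A ⊗[ℂ] A) →ₐ[ℂ] A ⊗[ℂ] (A ⊗[ℂ] A) :=
  Algebra.TensorProduct.map (AlgHom.id ℂ A) Algebra.TensorProduct.includeRight

/-- The embedding `A ⊗ A → A ⊗ A ⊗ A` in the factors 2,3: `a ⊗ b ↦ 1 ⊗ a ⊗ b`. -/
noncomputable def iota23 (A : Type*) [Ring A] [Algebra ℂ A] :
    (A ⊗[ℂ] A) →ₐ[ℂ] A ⊗[ℂ] (A ⊗[ℂ] A) :=
  Algebra.TensorProduct.includeRight

/-- Let `R` be an invertible solution of the quantum Yang–Baxter equation, let `Δ` be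
an algebra map intertwined by `R` (`R Δ(a) = Δ'(a) R`), and suppose
`Δ(P) = R⁻¹ P₁ R P₂`.  Then `P` satisfies the reflection equation
`R₂₁ P₁ R₁₂ P₂ = P₂ R₂₁ P₁ R₁₂`. -/
theorem reflection_equation_of_coproduct (A : Type*) [Ring A] [Algebra ℂ A]
    (R Rinv : A ⊗[ℂ] A) (hR1 : R * Rinv = 1) (hR2 : Rinv * R = 1)
    (hYBE : iota12 A R * iota13 A R * iota23 A R
          = iota23 A R * iota13 A R * iota12 A R)
    (Δ : A →ₐ[ℂ] A ⊗[ℂ] A)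
    (hInt : ∀ a : A, R * Δ a = (Algebra.TensorProduct.comm ℂ A A) (Δ a) * R)
    (P : A)
    (hP : Δ P = Rinv * (P ⊗ₜ[ℂ] (1 : A)) * R * ((1 : A) ⊗ₜ[ℂ] P)) :
    (Algebra.TensorProduct.comm ℂ A A) R * (P ⊗ₜ[ℂ] (1 : A)) * R * ((1 : A) ⊗ₜ[ℂ] P)
      = ((1 : A) ⊗ₜ[ℂ] P) * (Algebra.TensorProduct.comm ℂ A A) R
          * (P ⊗ₜ[ℂ] (1 : A)) * R := by
  set C := (Algebra.TensorProduct.comm ℂ A A) with hC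
  have h := hInt P
  rw [hP] at h
  simp only [map_mul, Algebra.TensorProduct.comm_tmul, hC] at h ⊢
  have hCR : C R * C Rinv = 1 := by
    rw [← map_mul, hR1, map_one]
  -- simplify left side of h using hR1
  have hL : R * (Rinv * (P ⊗ₜ[ℂ] (1 : A)) * R * ((1 : A) ⊗ₜ[ℂ] P))
      = (P ⊗ₜ[ℂ] (1 : A)) * R * ((1 : A) ⊗ₜ[ℂ] P) := by
    rw [← mul_assoc, ← mul_assoc, ← mul_assoc, hR1, one_mul]
  rw [hL] at h
  calc C R * (P ⊗ₜ[ℂ] (1 : A)) * R * ((1 : A) ⊗ₜ[ℂ] P)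
      = C R * ((P ⊗ₜ[ℂ] (1 : A)) * R * ((1 : A) ⊗ₜ[ℂ] P)) := by
        simp only [mul_assoc]
    _ = C R * (C Rinv * ((1 : A) ⊗ₜ[ℂ] P) * C R * (P ⊗ₜ[ℂ] (1 : A)) * R) := by rw [h]
    _ = (C R * C Rinv) * (((1 : A) ⊗ₜ[ℂ] P) * C R * (P ⊗ₜ[ℂ] (1 : A)) * R) := by
        simp only [mul_assoc]
    _ = ((1 : A) ⊗ₜ[ℂ] P) * C R * (P ⊗ₜ[ℂ] (1 : A)) * R := by
        rw [hCR, one_mul]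
end

section
/- Suppose F(x) and F'(x) are both invertible solutions of the ABRR equation F_{12}(x) B_2(x) = R̂^{-1}_{12} B_2(x) F_{12}(x), acting on a tensor product V⊗W of finite-dimensional h-semisimple modules, and suppose both are of the form 1⊗1 + (strictly lower triangular in the second factor), i.e., F - 1 maps W[μ] into ⊕_{μ'<μ} V ⊗ W[μ'] with coefficients rational in the parameters. If the eigenvalues b(λ) of B(x) on distinct weight spaces are distinct rational functions (b(λ) ≠ b(μ) for λ ≠ μ), then F = F'. -/
/-- Uniqueness of solutions of the ABRR equation.  Here `U` stands for `V ⊗ W`, the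
finite index type `ι` with its partial order indexes the weights of `W`, `p μ`
is the projection onto `V ⊗ W[μ]`, and `B = ∑ b μ • p μ` acts by the scalar `b μ`
on `V ⊗ W[μ]`, with `b λ ≠ b μ` for `λ ≠ μ`.  If `F` and `F'` are invertible,
satisfy the ABRR equation `F B = R̂⁻¹ B F`, and are strictly lower triangular in the
second factor (`F - 1` maps `W[μ]` into the spaces `W[μ']` with `μ' < μ`),
then `F = F'`. -/
theorem abrr_uniqueness (𝕜 : Type*) [Field 𝕜] (U : Type*) [AddCommGroup U] [Module 𝕜 U]
    (ι : Type*) [Fintype ι] [PartialOrder ι]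
    (p : ι → Module.End 𝕜 U)
    (hsum : ∑ i, p i = 1)
    (hidem : ∀ i, p i * p i = p i)
    (horth : ∀ i j, i ≠ j → p i * p j = 0)
    (b : ι → 𝕜) (hb : ∀ i j, i ≠ j → b i ≠ b j)
    (B : Module.End 𝕜 U) (hB : B = ∑ i, b i • p i)
    (Rhat Rinv : Module.End 𝕜 U) (hR : Rhat * Rinv = 1) (hR' : Rinv * Rhat = 1)
    (F F' : Module.End 𝕜 U) (hF : IsUnit F) (hF' : IsUnit F')
    (habrr : F * B = Rinv * B * F) (habrr' : F' * B = Rinv * B * F')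
    (htri : ∀ μ μ', ¬ μ' < μ → p μ' * (F - 1) * p μ = 0)
    (htri' : ∀ μ μ', ¬ μ' < μ → p μ' * (F' - 1) * p μ = 0) :
    F = F' := by
  obtain ⟨u, hu⟩ := hF
  set G : Module.End 𝕜 U := ↑u⁻¹ with hGdef
  have hGF : G * F = 1 := by rw [hGdef, ← hu]; exact u.inv_mul
  have hFG : F * G = 1 := by rw [hGdef, ← hu]; exact u.mul_inv
  -- expansion of a product through the resolution of identity
  have expand : ∀ A C : Module.End 𝕜 U, A * C = ∑ k, (A * p k) * (p k * C) := by
    intro A C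
    have h1 : A * C = ∑ k, A * p k * C := by
      rw [← Finset.sum_mul, ← Finset.mul_sum, hsum, mul_one]
    rw [h1]
    refine Finset.sum_congr rfl fun k _ => ?_
    conv_lhs => rw [show A * p k * C = A * (p k * p k) * C by rw [hidem]]
    simp [mul_assoc]
  -- product of strictly triangular operators is strictly triangular
  have mul_tri : ∀ Z₁ Z₂ : Module.End 𝕜 U,
      (∀ μ μ', ¬ μ' < μ → p μ' * Z₁ * p μ = 0) →
      (∀ μ μ', ¬ μ' < μ → p μ' * Z₂ * p μ = 0) →
      ∀ μ μ', ¬ μ' < μ → p μ' * (Z₁ * Z₂) * p μ = 0 := by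
    intro Z₁ Z₂ h₁ h₂ μ μ' hlt
    have h3 : p μ' * (Z₁ * Z₂) * p μ = (p μ' * Z₁) * (Z₂ * p μ) := by
      simp [mul_assoc]
    rw [h3, expand (p μ' * Z₁) (Z₂ * p μ)]
    refine Finset.sum_eq_zero fun k _ => ?_
    by_cases hk : μ' < k
    · have hkm : ¬ k < μ := fun h => hlt (hk.trans h)
      have h5 : p k * (Z₂ * p μ) = 0 := by
        rw [← mul_assoc]; exact h₂ μ k hkm
      rw [h5, mul_zero]
    · rw [h₁ k μ' hk, zero_mul]
  -- triangularity of G - 1, by well-founded induction on the second index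
  have hGtri : ∀ μ μ', ¬ μ' < μ → p μ' * (G - 1) * p μ = 0 := by
    intro j
    induction j using WellFoundedLT.induction with
    | _ j IH =>
      intro i hij
      have hzero : p i * (G * (F - 1)) * p j = 0 := by
        have hexp : p i * (G * (F - 1)) * p j
            = ∑ k, (p i * G * p k) * (p k * ((F - 1) * p j)) := by
          have h6 : p i * (G * (F - 1)) * p j = (p i * G) * ((F - 1) * p j) := by
            simp [mul_assoc]
          rw [h6, expand]
        rw [hexp]
        refine Finset.sum_eq_zero fun k _ => ?_
        by_cases hkj : k < j
        · have hik : ¬ i < k := fun h => hij (h.trans hkj)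
          have hIk := IH k hkj i hik
          have hik' : i ≠ k := by rintro rfl; exact hij hkj
          have h7 : p i * G * p k = 0 := by
            have h4 : p i * G * p k = p i * (G - 1) * p k + p i * p k := by noncomm_ring
            rw [h4, hIk, horth i k hik', add_zero]
          rw [h7, zero_mul]
        · have h8 : p k * ((F - 1) * p j) = 0 := by
            rw [← mul_assoc]; exact htri j k hkj
          rw [h8, mul_zero]
      have hGFj : p i * (G * F) * p j = p i * p j := by rw [hGF, mul_one]
      have h9 : p i * (G - 1) * p j
          = p i * (G * F) * p j - p i * (G * (F - 1)) * p j - p i * p j := by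
        noncomm_ring
      rw [h9, hGFj, hzero, sub_zero, sub_self]
  -- X = G * F' commutes with B
  set X : Module.End 𝕜 U := G * F' with hXdef
  have hBG : B * G = G * (Rinv * B) := by
    have h10 : G * (F * B) * G = G * (Rinv * B * F) * G := by rw [habrr]
    calc B * G = G * F * B * G := by rw [hGF, one_mul]
      _ = G * (Rinv * B * F) * G := by rw [← h10]; noncomm_ring
      _ = G * (Rinv * B) * (F * G) := by noncomm_ring
      _ = G * (Rinv * B) := by rw [hFG, mul_one]
  have hcomm : B * X = X * B := by
    calc B * X = (B * G) * F' := by rw [hXdef, mul_assoc]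
      _ = G * (Rinv * B * F') := by rw [hBG]; noncomm_ring
      _ = G * (F' * B) := by rw [← habrr']
      _ = X * B := by rw [hXdef]; noncomm_ring
  -- X - 1 is strictly triangular
  have hXtri : ∀ μ μ', ¬ μ' < μ → p μ' * (X - 1) * p μ = 0 := by
    intro μ μ' hlt
    have h11 : X - 1 = (G - 1) * (F' - 1) + (G - 1) + (F' - 1) := by
      rw [hXdef]; noncomm_ring
    rw [h11]
    have := mul_tri (G - 1) (F' - 1) hGtri htri' μ μ' hlt
    calc p μ' * ((G - 1) * (F' - 1) + (G - 1) + (F' - 1)) * p μ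
        = p μ' * ((G - 1) * (F' - 1)) * p μ + p μ' * (G - 1) * p μ
          + p μ' * (F' - 1) * p μ := by noncomm_ring
      _ = 0 := by rw [this, hGtri μ μ' hlt, htri' μ μ' hlt]; simp
  -- action of B on the projections
  have hBp : ∀ j, B * p j = b j • p j := by
    intro j
    rw [hB, Finset.sum_mul]
    rw [Finset.sum_eq_single j (fun k _ hk => by rw [smul_mul_assoc, horth k j hk, smul_zero])
      (fun h => absurd (Finset.mem_univ j) h)]
    rw [smul_mul_assoc, hidem]
  have hpB : ∀ i, p i * B = b i • p i := by
    intro i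
    rw [hB, Finset.mul_sum]
    rw [Finset.sum_eq_single i (fun k _ hk => by rw [mul_smul_comm, horth i k (Ne.symm hk), smul_zero])
      (fun h => absurd (Finset.mem_univ i) h)]
    rw [mul_smul_comm, hidem]
  -- all blocks of X - 1 vanish
  have hblocks : ∀ i j, p i * (X - 1) * p j = 0 := by
    intro i j
    by_cases hij : i = j
    · subst hij; exact hXtri i i (lt_irrefl i)
    · have hL : p i * (X * B) * p j = b j • (p i * X * p j) := by
        calc p i * (X * B) * p j = p i * X * (B * p j) := by noncomm_ring
          _ = p i * X * (b j • p j) := by rw [hBp]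
          _ = b j • (p i * X * p j) := by rw [mul_smul_comm]
      have hR9 : p i * (B * X) * p j = b i • (p i * X * p j) := by
        calc p i * (B * X) * p j = (p i * B) * (X * p j) := by noncomm_ring
          _ = (b i • p i) * (X * p j) := by rw [hpB]
          _ = b i • (p i * X * p j) := by simp [smul_mul_assoc, mul_assoc]
      have heq : b j • (p i * X * p j) = b i • (p i * X * p j) := by
        rw [← hL, ← hR9, hcomm]
      have hXij : p i * X * p j = 0 := by
        have hsub : (b j - b i) • (p i * X * p j) = 0 := by
          rw [sub_smul, heq, sub_self]
        rcases smul_eq_zero.mp hsub with h | h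
        · exact absurd (sub_eq_zero.mp h) (hb j i (Ne.symm hij))
        · exact h
      have : p i * (X - 1) * p j = p i * X * p j - p i * p j := by noncomm_ring
      rw [this, hXij, horth i j hij, sub_self]
  -- hence X = 1
  have hX1 : X = 1 := by
    have hZ : X - 1 = ∑ i, ∑ j, p i * (X - 1) * p j := by
      calc X - 1 = (∑ i, p i) * (X - 1) * (∑ j, p j) := by rw [hsum, one_mul, mul_one]
        _ = ∑ i, ∑ j, p i * (X - 1) * p j := by
            simp only [Finset.sum_mul, Finset.mul_sum, mul_assoc]
            exact Finset.sum_comm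
    have : X - 1 = 0 := by
      rw [hZ]
      exact Finset.sum_eq_zero fun i _ => Finset.sum_eq_zero fun j _ => hblocks i j
    exact sub_eq_zero.mp this
  calc F = F * 1 := by rw [mul_one]
    _ = F * X := by rw [hX1]
    _ = (F * G) * F' := by rw [hXdef, mul_assoc]
    _ = F' := by rw [hFG, one_mul]
end
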